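/- arXiv:0806.3910 — 3 statements merged into one kernel-verified Lean document; each statement's English description precedes it below -/
import Mathlib

section
/- Let X = (x_{ij}) be an m × n matrix of independent geometric random variables with E x_{ij} = z_{ij} > 0, let S be a nonempty set of index pairs, σ = ∑_{(i,j)∈S} z_{ij}, ν = ∑_{(i,j)∈S} z_{ij}². Then for any real a and any 0 < t ≤ 2, P(∑_{(i,j)∈S} x_{ij} ≤ σ − a) ≤ exp(−ta + (t²/2)(σ + ν)). -/
open MeasureTheory ProbabilityTheory

lemma exp_neg_le_quad {t : ℝ} (ht : 0 ≤ t) : Real.exp (-t) ≤ 1 - t + t ^ 2 / 2 := by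
  have hderiv : ∀ x : ℝ, HasDerivAt (fun x : ℝ => 1 - x + x ^ 2 / 2 - Real.exp (-x))
      (-1 + x + Real.exp (-x)) x := by
    intro x
    have he : HasDerivAt (fun x : ℝ => Real.exp (-x)) (-Real.exp (-x)) x := by
      simpa [Function.comp_def] using (Real.hasDerivAt_exp (-x)).comp x (hasDerivAt_neg x)
    have h2 : HasDerivAt (fun x : ℝ => x ^ 2 / 2) x x := by
      simpa using (hasDerivAt_pow 2 x).div_const 2
    have : HasDerivAt (fun x : ℝ => 1 - x + x ^ 2 / 2 - Real.exp (-x)) (0 - 1 + x - -Real.exp (-x)) x :=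
      (((hasDerivAt_const x (1 : ℝ)).sub (hasDerivAt_id x)).add h2).sub he
    convert this using 1
    ring
  have hmono : Monotone (fun x : ℝ => 1 - x + x ^ 2 / 2 - Real.exp (-x)) := by
    apply monotone_of_deriv_nonneg
    · exact fun x => (hderiv x).differentiableAt
    · intro x
      rw [(hderiv x).deriv]
      have := Real.add_one_le_exp (-x)
      linarith
  have h := hmono ht
  simp only [neg_zero, Real.exp_zero] at h
  norm_num at h
  linarith

lemma log_one_add_ge {w : ℝ} (hw : 0 ≤ w) : w - w ^ 2 / 2 ≤ Real.log (1 + w) := by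
  have hderiv : ∀ x : ℝ, 0 < 1 + x → HasDerivAt (fun x : ℝ => Real.log (1 + x) - x + x ^ 2 / 2)
      (1 / (1 + x) - 1 + x) x := by
    intro x hx
    have h1 : HasDerivAt (fun y : ℝ => 1 + y) 1 x := by
      simpa using (hasDerivAt_id x).const_add (1 : ℝ)
    have hlog : HasDerivAt (fun y : ℝ => Real.log (1 + y)) (1 / (1 + x)) x := by
      simpa [one_div, Function.comp_def] using (Real.hasDerivAt_log hx.ne').comp x h1
    have h2 : HasDerivAt (fun x : ℝ => x ^ 2 / 2) x x := by
      simpa using (hasDerivAt_pow 2 x).div_const 2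
    exact (hlog.sub (hasDerivAt_id x)).add h2
  have hmono : MonotoneOn (fun x : ℝ => Real.log (1 + x) - x + x ^ 2 / 2) (Set.Ici 0) := by
    apply monotoneOn_of_deriv_nonneg (convex_Ici 0)
    · intro x hx
      have hx' : (0:ℝ) < 1 + x := by have := hx; simp at this; linarith
      exact ((hderiv x hx').continuousAt).continuousWithinAt
    · intro x hx
      rw [interior_Ici] at hx
      have hx' : (0:ℝ) < 1 + x := by have : (0:ℝ) < x := hx; linarith
      exact ((hderiv x hx').differentiableAt).differentiableWithinAt
    · intro x hx
      rw [interior_Ici] at hx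
      have hx0 : (0:ℝ) < x := hx
      have hx' : (0:ℝ) < 1 + x := by linarith
      rw [(hderiv x hx').deriv]
      have : 1 / (1 + x) - 1 + x = x ^ 2 / (1 + x) := by field_simp; ring
      rw [this]
      positivity
  have h := hmono (Set.self_mem_Ici) hw hw
  simp only [add_zero, Real.log_one] at h
  norm_num at h
  linarith

lemma one_div_le_exp_quad {w : ℝ} (hw : 0 ≤ w) :
    1 / (1 + w) ≤ Real.exp (-w + w ^ 2 / 2) := by
  have h1w : (0:ℝ) < 1 + w := by linarith
  have h : Real.exp (w - w ^ 2 / 2) ≤ 1 + w := by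
    calc Real.exp (w - w ^ 2 / 2) ≤ Real.exp (Real.log (1 + w)) :=
          Real.exp_le_exp.mpr (log_one_add_ge hw)
      _ = 1 + w := Real.exp_log h1w
  have := one_div_le_one_div_of_le (Real.exp_pos (w - w ^ 2 / 2)) h
  calc 1 / (1 + w) ≤ 1 / Real.exp (w - w ^ 2 / 2) := this
    _ = Real.exp (-w + w ^ 2 / 2) := by
        rw [one_div, ← Real.exp_neg]; ring_nf

lemma factor_bound {z t : ℝ} (hz : 0 < z) (ht0 : 0 < t) (ht2 : t ≤ 2) :
    1 / (1 + z * (1 - Real.exp (-t))) ≤ Real.exp (-(t * z) + t ^ 2 / 2 * (z + z ^ 2)) := by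
  set e := 1 - Real.exp (-t) with he
  have he1 : t - t ^ 2 / 2 ≤ e := by
    have := exp_neg_le_quad ht0.le; rw [he]; linarith
  have he2 : e ≤ t := by
    have := Real.add_one_le_exp (-t); rw [he]; linarith
  have he0 : 0 ≤ e := by nlinarith
  set w := z * e with hw
  have hw0 : 0 ≤ w := mul_nonneg hz.le he0
  refine (one_div_le_exp_quad hw0).trans (Real.exp_le_exp.mpr ?_)
  have h1 : z * t - z * (t ^ 2 / 2) ≤ w := by
    rw [hw]; nlinarith
  have h2 : w ≤ z * t := by rw [hw]; nlinarith
  have h3 : w ^ 2 ≤ (z * t) ^ 2 := by nlinarith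
  nlinarith

lemma geom_mgf {Ω : Type*} [MeasurableSpace Ω] (μ : Measure Ω) [IsProbabilityMeasure μ]
    (X : Ω → ℕ) (z t : ℝ) (hz : 0 < z) (ht : 0 < t) (hm : Measurable X)
    (hd : ∀ k, μ {ω | X ω = k}
      = ENNReal.ofReal ((1 / (1 + z)) * (z / (1 + z)) ^ k)) :
    mgf (fun ω => (X ω : ℝ)) μ (-t) = 1 / (1 + z * (1 - Real.exp (-t))) := by
  have h1z : (0:ℝ) < 1 + z := by linarith
  set q : ℝ := z / (1 + z) with hq
  have hq0 : 0 ≤ q := div_nonneg hz.le h1z.le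
  have hq1 : q < 1 := by rw [hq, div_lt_one h1z]; linarith
  have hexp1 : Real.exp (-t) < 1 := Real.exp_lt_one_iff.mpr (by linarith)
  set r : ℝ := q * Real.exp (-t) with hr
  have hr0 : 0 ≤ r := mul_nonneg hq0 (Real.exp_pos _).le
  have hr1 : r < 1 := by
    calc r ≤ q * 1 := by
          apply mul_le_mul_of_nonneg_left hexp1.le hq0
      _ = q := mul_one q
      _ < 1 := hq1
  -- map measure
  have hmap : IsProbabilityMeasure (μ.map X) := Measure.isProbabilityMeasure_map hm.aemeasurable
  have hg : Measurable (fun k : ℕ => Real.exp (-t * k)) := measurable_from_top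
  have hgint : Integrable (fun k : ℕ => Real.exp (-t * k)) (μ.map X) := by
    refine Integrable.mono' (integrable_const 1) hg.aestronglyMeasurable
      (ae_of_all _ fun k => ?_)
    rw [Real.norm_eq_abs, abs_of_pos (Real.exp_pos _)]
    apply Real.exp_le_one_iff.mpr
    have : (0:ℝ) ≤ (k:ℝ) := Nat.cast_nonneg k
    nlinarith
  have hsingle : ∀ k : ℕ, ((μ.map X) {k}).toReal = (1 / (1 + z)) * q ^ k := by
    intro k
    rw [Measure.map_apply hm (measurableSet_singleton k)]
    have : X ⁻¹' {k} = {ω | X ω = k} := rfl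
    rw [this, hd k, ENNReal.toReal_ofReal (by positivity)]
  calc mgf (fun ω => (X ω : ℝ)) μ (-t)
      = ∫ ω, Real.exp (-t * (X ω : ℝ)) ∂μ := rfl
    _ = ∫ k, Real.exp (-t * (k : ℝ)) ∂(μ.map X) :=
        (integral_map hm.aemeasurable hg.aestronglyMeasurable).symm
    _ = ∑' k : ℕ, ((μ.map X) {k}).toReal • Real.exp (-t * (k : ℝ)) :=
        integral_countable' hgint
    _ = ∑' k : ℕ, (1 / (1 + z)) * r ^ k := by
        refine tsum_congr fun k => ?_
        rw [hsingle k, smul_eq_mul, hr, mul_pow, ← Real.exp_nat_mul, mul_assoc]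
        ring_nf
    _ = (1 / (1 + z)) * (1 - r)⁻¹ := by
        rw [tsum_mul_left, tsum_geometric_of_lt_one hr0 hr1]
    _ = 1 / (1 + z * (1 - Real.exp (-t))) := by
        have key : (1 + z) * (1 - r) = 1 + z * (1 - Real.exp (-t)) := by
          rw [hr, hq]; field_simp; ring
        rw [one_div, one_div, ← mul_inv, key]

/-- Large deviation bound (lower tail) for a sum of independent geometric random
variables `x_{ij}` with `E x_{ij} = z_{ij} > 0`: for any real `a` and `0 < t ≤ 2`,
`P(∑_{(i,j)∈S} x_{ij} ≤ σ - a) ≤ exp(-ta + (t²/2)(σ + ν))`, where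
`σ = ∑_S z_{ij}` and `ν = ∑_S z_{ij}²`. -/
theorem geometric_sum_lower_tail
    {m n : ℕ} {Ω : Type*} [MeasurableSpace Ω] (μ : Measure Ω) [IsProbabilityMeasure μ]
    (X : Fin m × Fin n → Ω → ℕ) (z : Fin m × Fin n → ℝ)
    (hz : ∀ ij, 0 < z ij)
    (hmeas : ∀ ij, Measurable (X ij))
    (hindep : iIndepFun X μ)
    (hdist : ∀ ij k, μ {ω | X ij ω = k}
      = ENNReal.ofReal ((1 / (1 + z ij)) * (z ij / (1 + z ij)) ^ k))
    (S : Finset (Fin m × Fin n)) (hS : S.Nonempty)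
    (σ ν : ℝ) (hσ : σ = ∑ ij ∈ S, z ij) (hν : ν = ∑ ij ∈ S, (z ij) ^ 2)
    (a t : ℝ) (ht0 : 0 < t) (ht2 : t ≤ 2) :
    μ {ω | (∑ ij ∈ S, (X ij ω : ℝ)) ≤ σ - a}
      ≤ ENNReal.ofReal (Real.exp (-(t * a) + t ^ 2 / 2 * (σ + ν))) := by
  classical
  set Y : Fin m × Fin n → Ω → ℝ := fun ij ω => (X ij ω : ℝ) with hY
  have hYmeas : ∀ ij, Measurable (Y ij) := fun ij => measurable_from_top.comp (hmeas ij)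
  have hYindep : iIndepFun Y μ :=
    hindep.comp (fun _ => (Nat.cast : ℕ → ℝ)) (fun _ => measurable_from_top)
  have hsum_eq : (∑ ij ∈ S, Y ij) = fun ω => ∑ ij ∈ S, Y ij ω := by
    funext ω; rw [Finset.sum_apply]
  have hTmeas : Measurable (fun ω => ∑ ij ∈ S, Y ij ω) :=
    Finset.measurable_sum S fun ij _ => hYmeas ij
  have hint : Integrable (fun ω => Real.exp ((-t) * (∑ ij ∈ S, Y ij ω))) μ := by
    refine Integrable.mono' (integrable_const 1)
      ((hTmeas.const_mul (-t)).exp.aestronglyMeasurable)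
      (ae_of_all _ fun ω => ?_)
    rw [Real.norm_eq_abs, abs_of_pos (Real.exp_pos _)]
    apply Real.exp_le_one_iff.mpr
    have hsnn : 0 ≤ ∑ ij ∈ S, Y ij ω :=
      Finset.sum_nonneg fun ij _ => Nat.cast_nonneg _
    nlinarith
  have hchern := measure_le_le_exp_mul_mgf (μ := μ)
    (X := fun ω => ∑ ij ∈ S, Y ij ω) (σ - a) (neg_nonpos.mpr ht0.le) hint
  -- compute mgf of the sum
  have hmgf_sum : mgf (fun ω => ∑ ij ∈ S, Y ij ω) μ (-t)
      = ∏ ij ∈ S, mgf (Y ij) μ (-t) := by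
    rw [← hsum_eq]; exact hYindep.mgf_sum hYmeas S
  have hmgf_each : ∀ ij ∈ S, mgf (Y ij) μ (-t)
      = 1 / (1 + z ij * (1 - Real.exp (-t))) := fun ij _ =>
    geom_mgf μ (X ij) (z ij) t (hz ij) ht0 (hmeas ij) (hdist ij)
  have hprod_le : ∏ ij ∈ S, mgf (Y ij) μ (-t)
      ≤ ∏ ij ∈ S, Real.exp (-(t * z ij) + t ^ 2 / 2 * (z ij + z ij ^ 2)) := by
    refine Finset.prod_le_prod (fun ij hij => ?_) (fun ij hij => ?_)
    · rw [hmgf_each ij hij]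
      have : (0:ℝ) < 1 + z ij * (1 - Real.exp (-t)) := by
        have h1 := Real.exp_le_one_iff.mpr (neg_nonpos.mpr ht0.le)
        have h2 := hz ij
        nlinarith
      positivity
    · rw [hmgf_each ij hij]
      exact factor_bound (hz ij) ht0 ht2
  have hprod_exp : ∏ ij ∈ S, Real.exp (-(t * z ij) + t ^ 2 / 2 * (z ij + z ij ^ 2))
      = Real.exp (-(t * σ) + t ^ 2 / 2 * (σ + ν)) := by
    rw [← Real.exp_sum]
    congr 1
    have : ∑ ij ∈ S, (-(t * z ij) + t ^ 2 / 2 * (z ij + z ij ^ 2))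
        = ∑ ij ∈ S, ((-t) * z ij + (t ^ 2 / 2) * z ij + (t ^ 2 / 2) * z ij ^ 2) :=
      Finset.sum_congr rfl fun ij _ => by ring
    rw [this, Finset.sum_add_distrib, Finset.sum_add_distrib, ← Finset.mul_sum,
      ← Finset.mul_sum, ← Finset.mul_sum, ← hσ, ← hν]
    ring
  have hfinal : (μ {ω | (∑ ij ∈ S, (X ij ω : ℝ)) ≤ σ - a}).toReal
      ≤ Real.exp (-(t * a) + t ^ 2 / 2 * (σ + ν)) := by
    have : (μ {ω | (∑ ij ∈ S, (X ij ω : ℝ)) ≤ σ - a}).toReal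
        ≤ Real.exp (-(-t) * (σ - a)) * mgf (fun ω => ∑ ij ∈ S, Y ij ω) μ (-t) := hchern
    calc (μ {ω | (∑ ij ∈ S, (X ij ω : ℝ)) ≤ σ - a}).toReal
        ≤ Real.exp (-(-t) * (σ - a)) * mgf (fun ω => ∑ ij ∈ S, Y ij ω) μ (-t) := this
      _ ≤ Real.exp (-(-t) * (σ - a))
            * Real.exp (-(t * σ) + t ^ 2 / 2 * (σ + ν)) := by
          rw [hmgf_sum, ← hprod_exp]
          exact mul_le_mul_of_nonneg_left hprod_le (Real.exp_pos _).le
      _ = Real.exp (-(t * a) + t ^ 2 / 2 * (σ + ν)) := by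
          rw [← Real.exp_add]; congr 1; ring
  have hne : μ {ω | (∑ ij ∈ S, (X ij ω : ℝ)) ≤ σ - a} ≠ ⊤ := measure_ne_top μ _
  calc μ {ω | (∑ ij ∈ S, (X ij ω : ℝ)) ≤ σ - a}
      = ENNReal.ofReal ((μ {ω | (∑ ij ∈ S, (X ij ω : ℝ)) ≤ σ - a}).toReal) :=
        (ENNReal.ofReal_toReal hne).symm
    _ ≤ ENNReal.ofReal (Real.exp (-(t * a) + t ^ 2 / 2 * (σ + ν))) :=
        ENNReal.ofReal_le_ofReal hfinal
end

section
/- Let X = (x_{ij}) be an m × n matrix of independent geometric random variables with E x_{ij} = z_{ij} > 0, let S be a nonempty set of index pairs, σ = ∑_{(i,j)∈S} z_{ij}, ν = ∑_{(i,j)∈S} z_{ij}². Then for any real a and any t with 0 < t ≤ 1/3 and t ≤ 1/(2 z_{ij}) for all (i,j) ∈ S, P(∑_{(i,j)∈S} x_{ij} ≥ σ + a) ≤ exp(−ta + 2t²(σ + ν)). -/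
open MeasureTheory ProbabilityTheory

private lemma gsut_exp_le_aux {t : ℝ} (h0 : 0 ≤ t) (h1 : t ≤ 1) :
    Real.exp t ≤ 1 + t + (3/4) * t^2 := by
  have := Real.exp_bound' h0 h1 (n := 2) (by norm_num)
  simp [Finset.sum_range_succ, Nat.factorial] at this
  nlinarith [this]

private lemma gsut_box_aux {s t : ℝ} (hs0 : 0 ≤ s) (hs : s ≤ 1/2) (ht0 : 0 ≤ t) (ht : t ≤ 1/3) :
    1 ≤ (1 - s - (3/4)*s*t) * (1 + (s + 2*s*t + 2*s^2) + (s + 2*s*t + 2*s^2)^2/2) := by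
  nlinarith [sq_nonneg s, sq_nonneg t, sq_nonneg (s*t), mul_nonneg hs0 ht0, sq_nonneg (1-2*s),
    sq_nonneg (s-t), mul_nonneg (mul_nonneg hs0 hs0) ht0, mul_nonneg (mul_nonneg hs0 ht0) ht0]

private lemma gsut_factor_bound {z t : ℝ} (hz : 0 < z) (ht0 : 0 < t) (ht3 : t ≤ 1/3)
    (hzt : z * t ≤ 1/2) :
    z * (Real.exp t - 1) ≤ 5/8 ∧
    1 / (1 - z * (Real.exp t - 1)) ≤ Real.exp (t * z + 2 * t^2 * (z + z^2)) := by
  have hexp := gsut_exp_le_aux ht0.le (ht3.trans (by norm_num))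
  have h1 : z * (Real.exp t - 1) ≤ z*t + (3/4)*(z*t)*t := by nlinarith
  have h58 : z*t + (3/4)*(z*t)*t ≤ 5/8 := by nlinarith
  refine ⟨h1.trans h58, ?_⟩
  have hu0 : 0 ≤ z * (Real.exp t - 1) := by
    have := Real.one_le_exp ht0.le; nlinarith
  have hd1 : (0:ℝ) < 1 - (z*t + (3/4)*(z*t)*t) := by nlinarith
  have hd2 : (0:ℝ) < 1 - z * (Real.exp t - 1) := by nlinarith
  have hst0 : 0 ≤ z * t := by positivity
  have key := gsut_box_aux hst0 hzt ht0.le ht3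
  set s := z * t with hsdef
  set w : ℝ := s + 2*s*t + 2*s^2 with hwdef
  have hw0 : 0 ≤ w := by positivity
  have hwe : t * z + 2 * t^2 * (z + z^2) = w := by rw [hwdef, hsdef]; ring
  rw [hwe]
  have step1 : 1 / (1 - z * (Real.exp t - 1)) ≤ 1 / (1 - s - (3/4)*s*t) :=
    one_div_le_one_div_of_le (by linarith) (by linarith)
  have step2 : 1 / (1 - s - (3/4)*s*t) ≤ 1 + w + w^2/2 := by
    rw [div_le_iff₀ (by linarith)]
    nlinarith [key]
  have step3 : 1 + w + w^2/2 ≤ Real.exp w := Real.quadratic_le_exp_of_nonneg hw0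
  linarith

/-- Large deviation bound (upper tail) for a sum of independent geometric random
variables `x_{ij}` with `E x_{ij} = z_{ij} > 0`: for any real `a` and `t` with
`0 < t ≤ 1/3` and `t ≤ 1/(2 z_{ij})` for all `(i,j) ∈ S`,
`P(∑_{(i,j)∈S} x_{ij} ≥ σ + a) ≤ exp(-ta + 2t²(σ + ν))`, where
`σ = ∑_S z_{ij}` and `ν = ∑_S z_{ij}²`. -/
theorem geometric_sum_upper_tail
    {m n : ℕ} {Ω : Type*} [MeasurableSpace Ω] (μ : Measure Ω) [IsProbabilityMeasure μ]
    (X : Fin m × Fin n → Ω → ℕ) (z : Fin m × Fin n → ℝ)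
    (hz : ∀ ij, 0 < z ij)
    (hmeas : ∀ ij, Measurable (X ij))
    (hindep : iIndepFun X μ)
    (hdist : ∀ ij k, μ {ω | X ij ω = k}
      = ENNReal.ofReal ((1 / (1 + z ij)) * (z ij / (1 + z ij)) ^ k))
    (S : Finset (Fin m × Fin n)) (hS : S.Nonempty)
    (σ ν : ℝ) (hσ : σ = ∑ ij ∈ S, z ij) (hν : ν = ∑ ij ∈ S, (z ij) ^ 2)
    (a t : ℝ) (ht0 : 0 < t) (ht3 : t ≤ 1 / 3)
    (htz : ∀ ij ∈ S, t ≤ 1 / (2 * z ij)) :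
    μ {ω | σ + a ≤ (∑ ij ∈ S, (X ij ω : ℝ))}
      ≤ ENNReal.ofReal (Real.exp (-(t * a) + 2 * t ^ 2 * (σ + ν))) := by
  -- real-valued versions
  set Y : Fin m × Fin n → Ω → ℝ := fun ij ω => (X ij ω : ℝ) with hYdef
  have hmeasY : ∀ ij, Measurable (Y ij) := fun ij => measurable_from_top.comp (hmeas ij)
  have hindepY : iIndepFun Y μ :=
    hindep.comp _ (fun _ => measurable_from_top)
  have hzt : ∀ ij ∈ S, z ij * t ≤ 1/2 := by
    intro ij hij
    have h2z : (0:ℝ) < 2 * z ij := by linarith [hz ij]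
    have := htz ij hij
    rw [le_div_iff₀ h2z] at this
    linarith
  -- per-factor facts
  have hfb : ∀ ij ∈ S, z ij * (Real.exp t - 1) ≤ 5/8 ∧
      1 / (1 - z ij * (Real.exp t - 1)) ≤ Real.exp (t * z ij + 2 * t^2 * (z ij + (z ij)^2)) :=
    fun ij hij => gsut_factor_bound (hz ij) ht0 ht3 (hzt ij hij)
  have hden : ∀ ij ∈ S, (0:ℝ) < 1 - z ij * (Real.exp t - 1) := by
    intro ij hij; have := (hfb ij hij).1; linarith
  -- per-factor lintegral computation
  have hL : ∀ ij ∈ S, ∫⁻ ω, ENNReal.ofReal (Real.exp (t * Y ij ω)) ∂μ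
      = ENNReal.ofReal (1 / (1 - z ij * (Real.exp t - 1))) := by
    intro ij hij
    have h1z : (0:ℝ) < 1 + z ij := by linarith [hz ij]
    have hr0 : 0 ≤ z ij / (1 + z ij) * Real.exp t :=
      mul_nonneg (div_nonneg (hz ij).le h1z.le) (Real.exp_pos _).le
    have hr1 : z ij / (1 + z ij) * Real.exp t < 1 := by
      rw [div_mul_eq_mul_div, div_lt_one h1z]
      have := hden ij hij; nlinarith
    have hg : Measurable fun k : ℕ => ENNReal.ofReal (Real.exp (t * (k:ℝ))) :=
      measurable_from_top
    have hsum : Summable fun k : ℕ => (1/(1 + z ij)) * (z ij / (1 + z ij) * Real.exp t)^k :=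
      (summable_geometric_of_lt_one hr0 hr1).mul_left _
    calc ∫⁻ ω, ENNReal.ofReal (Real.exp (t * Y ij ω)) ∂μ
        = ∫⁻ k, ENNReal.ofReal (Real.exp (t*(k:ℝ))) ∂(μ.map (X ij)) :=
          (lintegral_map hg (hmeas ij)).symm
      _ = ∑' k : ℕ, ENNReal.ofReal (Real.exp (t*(k:ℝ))) * μ.map (X ij) {k} :=
          lintegral_countable' _
      _ = ∑' k : ℕ, ENNReal.ofReal ((1/(1 + z ij)) * (z ij / (1 + z ij) * Real.exp t)^k) := by
          apply tsum_congr; intro k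
          rw [Measure.map_apply (hmeas ij) (measurableSet_singleton k)]
          have hpre : X ij ⁻¹' {k} = {ω | X ij ω = k} := rfl
          rw [hpre, hdist ij k, ← ENNReal.ofReal_mul (Real.exp_pos _).le]
          congr 1
          rw [mul_comm t (k:ℝ), Real.exp_nat_mul, mul_pow]
          ring
      _ = ENNReal.ofReal (∑' k : ℕ, (1/(1 + z ij)) * (z ij / (1 + z ij) * Real.exp t)^k) :=
          (ENNReal.ofReal_tsum_of_nonneg
            (fun k => mul_nonneg (one_div_nonneg.mpr h1z.le) (pow_nonneg hr0 k)) hsum).symm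
      _ = ENNReal.ofReal ((1/(1 + z ij)) * (1 - z ij / (1 + z ij) * Real.exp t)⁻¹) := by
          rw [tsum_mul_left, tsum_geometric_of_lt_one hr0 hr1]
      _ = ENNReal.ofReal (1 / (1 - z ij * (Real.exp t - 1))) := by
          congr 1
          have hne : (1 + z ij) ≠ 0 := ne_of_gt h1z
          have hkey : (1 + z ij) * (1 - z ij / (1 + z ij) * Real.exp t)
              = 1 - z ij * (Real.exp t - 1) := by field_simp; ring
          rw [one_div, one_div, ← hkey, mul_inv]
  -- integrability
  have hInt : ∀ ij ∈ S, Integrable (fun ω => Real.exp (t * Y ij ω)) μ := by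
    intro ij hij
    refine ⟨((hmeasY ij).const_mul t).exp.aestronglyMeasurable, ?_⟩
    rw [hasFiniteIntegral_iff_ofReal (Filter.Eventually.of_forall fun ω => (Real.exp_pos _).le),
      hL ij hij]
    exact ENNReal.ofReal_lt_top
  -- mgf values
  have hmgf : ∀ ij ∈ S, mgf (Y ij) μ t = 1 / (1 - z ij * (Real.exp t - 1)) := by
    intro ij hij
    rw [mgf, integral_eq_lintegral_of_nonneg_ae
      (Filter.Eventually.of_forall fun ω => (Real.exp_pos _).le)
      ((hmeasY ij).const_mul t).exp.aestronglyMeasurable, hL ij hij,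
      ENNReal.toReal_ofReal (one_div_nonneg.mpr (hden ij hij).le)]
  -- Chernoff
  have hIntSum : Integrable (fun ω => Real.exp (t * (∑ ij ∈ S, Y ij) ω)) μ :=
    hindepY.integrable_exp_mul_sum (fun i => hmeasY i) hInt
  have chern := measure_ge_le_exp_mul_mgf (X := ∑ ij ∈ S, Y ij) (μ := μ) (σ + a) ht0.le hIntSum
  rw [hindepY.mgf_sum (fun i => hmeasY i) S] at chern
  have hsetEq : {ω | σ + a ≤ (∑ ij ∈ S, Y ij) ω} = {ω | σ + a ≤ ∑ ij ∈ S, (X ij ω : ℝ)} := by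
    ext ω; simp [Finset.sum_apply, hYdef]
  rw [hsetEq] at chern
  -- product bound
  have hprod : ∏ ij ∈ S, mgf (Y ij) μ t ≤ Real.exp (t*σ + 2*t^2*(σ+ν)) := by
    calc ∏ ij ∈ S, mgf (Y ij) μ t
        ≤ ∏ ij ∈ S, Real.exp (t * z ij + 2*t^2*(z ij + (z ij)^2)) := by
          apply Finset.prod_le_prod
          · intro ij hij; rw [hmgf ij hij]
            exact one_div_nonneg.mpr (hden ij hij).le
          · intro ij hij; rw [hmgf ij hij]; exact (hfb ij hij).2
      _ = Real.exp (∑ ij ∈ S, (t * z ij + 2*t^2*(z ij + (z ij)^2))) := (Real.exp_sum _ _).symm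
      _ = Real.exp (t*σ + 2*t^2*(σ+ν)) := by
          congr 1
          rw [hσ, hν, Finset.sum_add_distrib, ← Finset.mul_sum, ← Finset.mul_sum,
            Finset.sum_add_distrib]
  -- finish
  have hfin : μ {ω | σ + a ≤ ∑ ij ∈ S, (X ij ω : ℝ)} ≠ ⊤ := measure_ne_top μ _
  calc μ {ω | σ + a ≤ ∑ ij ∈ S, (X ij ω : ℝ)}
      = ENNReal.ofReal ((μ {ω | σ + a ≤ ∑ ij ∈ S, (X ij ω : ℝ)}).toReal) :=
        (ENNReal.ofReal_toReal hfin).symm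
    _ ≤ ENNReal.ofReal (Real.exp (-(t * a) + 2 * t ^ 2 * (σ + ν))) := by
        apply ENNReal.ofReal_le_ofReal
        calc (μ {ω | σ + a ≤ ∑ ij ∈ S, (X ij ω : ℝ)}).toReal
            ≤ Real.exp (-t * (σ + a)) * ∏ ij ∈ S, mgf (Y ij) μ t := chern
          _ ≤ Real.exp (-t * (σ + a)) * Real.exp (t*σ + 2*t^2*(σ+ν)) := by
              apply mul_le_mul_of_nonneg_left hprod (Real.exp_pos _).le
          _ = Real.exp (-(t * a) + 2 * t ^ 2 * (σ + ν)) := by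
              rw [← Real.exp_add]; congr 1; ring
end

section
/- Let Z = (z_{ij}) be a positive m × n real matrix with row sums r_i and column sums c_j, total sum N, and suppose there exist reals λ_1,…,λ_m, μ_1,…,μ_n with ln((z_{ij}+1)/z_{ij}) = λ_i + μ_j for all i, j. Let X = (x_{ij}) be the matrix of independent geometric random variables with E x_{ij} = z_{ij}. Then for every nonnegative integer matrix D = (d_{ij}) with row sums r_i and column sums c_j, P(X = D) = e^{−g(Z)}, where g(Z) = ∑_{i,j} [(z_{ij}+1)ln(z_{ij}+1) − z_{ij} ln z_{ij}]. In particular P(X = D) does not depend on D. -/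
open MeasureTheory ProbabilityTheory

/-- Let `Z = (z_{ij})` be a positive `m × n` matrix with row sums `r_i`, column sums
`c_j`, satisfying `log((z_{ij}+1)/z_{ij}) = λ_i + μ_j` for all `i,j`. Let
`X = (x_{ij})` be a matrix of independent geometric random variables with
`E x_{ij} = z_{ij}`. Then for every contingency table `D` with margins `(R,C)`,
`P(X = D) = e^{-g(Z)}`, where `g(Z) = ∑_{i,j} ((z_{ij}+1) log(z_{ij}+1) - z_{ij} log z_{ij})`. -/
theorem geometric_uniform_on_tables
    {m n : ℕ} {Ω : Type*} [MeasurableSpace Ω] (μ : Measure Ω) [IsProbabilityMeasure μ]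
    (z : Fin m × Fin n → ℝ) (r : Fin m → ℝ) (c : Fin n → ℝ)
    (lam : Fin m → ℝ) (mu : Fin n → ℝ)
    (hz : ∀ ij, 0 < z ij)
    (hrow : ∀ i, ∑ j, z (i, j) = r i)
    (hcol : ∀ j, ∑ i, z (i, j) = c j)
    (hopt : ∀ i j, Real.log ((z (i, j) + 1) / z (i, j)) = lam i + mu j)
    (X : Fin m × Fin n → Ω → ℕ)
    (hmeas : ∀ ij, Measurable (X ij))
    (hindep : iIndepFun X μ)
    (hdist : ∀ ij k, μ {ω | X ij ω = k}
      = ENNReal.ofReal ((1 / (1 + z ij)) * (z ij / (1 + z ij)) ^ k))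
    (D : Fin m × Fin n → ℕ)
    (hDrow : ∀ i, (∑ j, (D (i, j) : ℝ)) = r i)
    (hDcol : ∀ j, (∑ i, (D (i, j) : ℝ)) = c j) :
    μ {ω | ∀ ij, X ij ω = D ij}
      = ENNReal.ofReal (Real.exp
          (-(∑ ij, ((z ij + 1) * Real.log (z ij + 1) - z ij * Real.log (z ij))))) := by
  have hz1 : ∀ ij, (0:ℝ) < 1 + z ij := fun ij => by linarith [hz ij]
  -- Step 1: independence factorization
  have hset : {ω | ∀ ij, X ij ω = D ij} = ⋂ ij, X ij ⁻¹' {D ij} := by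
    ext ω; simp [Set.mem_iInter]
  have hfact : μ {ω | ∀ ij, X ij ω = D ij} = ∏ ij, μ (X ij ⁻¹' {D ij}) := by
    rw [hset]
    exact hindep.meas_iInter (fun ij => ⟨{D ij}, measurableSet_singleton _, rfl⟩)
  -- each factor
  have hfac : ∀ ij, μ (X ij ⁻¹' {D ij})
      = ENNReal.ofReal ((1 / (1 + z ij)) * (z ij / (1 + z ij)) ^ (D ij)) := by
    intro ij
    have := hdist ij (D ij)
    simpa [Set.preimage, Set.mem_singleton_iff] using this
  rw [hfact]
  simp only [hfac]
  rw [← ENNReal.ofReal_prod_of_nonneg]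
  swap
  · intro ij _
    have := (hz ij).le
    positivity
  congr 1
  -- Step 2: real computation
  have hfac_exp : ∀ ij : Fin m × Fin n,
      (1 / (1 + z ij)) * (z ij / (1 + z ij)) ^ (D ij)
        = Real.exp (-(Real.log (1 + z ij) + (D ij : ℝ) * (lam ij.1 + mu ij.2))) := by
    intro ij
    have h1 : (0:ℝ) < 1 + z ij := hz1 ij
    have h2 : (0:ℝ) < z ij / (1 + z ij) := div_pos (hz ij) h1
    have hlog : Real.log (z ij / (1 + z ij)) = -(lam ij.1 + mu ij.2) := by
      have := hopt ij.1 ij.2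
      rw [← this, ← Real.log_inv]
      congr 1
      rw [inv_div]
      ring_nf
    have h3 : -((D ij : ℝ) * (lam ij.1 + mu ij.2))
        = (D ij : ℝ) * Real.log (z ij / (1 + z ij)) := by rw [hlog]; ring
    rw [neg_add, Real.exp_add, Real.exp_neg, Real.exp_log h1, h3, Real.exp_nat_mul,
      Real.exp_log h2, one_div]
  simp only [hfac_exp]
  rw [← Real.exp_sum]
  congr 1
  rw [Finset.sum_neg_distrib, neg_inj]
  -- key: ∑ D (lam+mu) = ∑ z (lam+mu)
  have hswap : ∀ (f : Fin m × Fin n → ℝ), (∀ i, ∑ j, f (i,j) = r i) → (∀ j, ∑ i, f (i,j) = c j) →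
      ∑ ij : Fin m × Fin n, f ij * (lam ij.1 + mu ij.2)
        = ∑ i, lam i * r i + ∑ j, mu j * c j := by
    intro f hr hc
    rw [Fintype.sum_prod_type]
    have : ∀ i, ∑ j, f (i,j) * (lam i + mu j) = lam i * r i + ∑ j, f (i,j) * mu j := by
      intro i
      rw [← hr i, Finset.mul_sum, ← Finset.sum_add_distrib]
      exact Finset.sum_congr rfl fun j _ => by ring
    simp only [this]
    rw [Finset.sum_add_distrib]
    congr 1
    rw [Finset.sum_comm]
    congr 1; ext j
    rw [← Finset.sum_mul, hc j, mul_comm]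
  have hD := hswap (fun ij => (D ij : ℝ)) hDrow hDcol
  have hZ := hswap z hrow hcol
  have key : ∑ ij : Fin m × Fin n, (D ij : ℝ) * (lam ij.1 + mu ij.2)
      = ∑ ij : Fin m × Fin n, z ij * (lam ij.1 + mu ij.2) := hD.trans hZ.symm
  calc ∑ ij : Fin m × Fin n, (Real.log (1 + z ij) + (D ij : ℝ) * (lam ij.1 + mu ij.2))
      = ∑ ij : Fin m × Fin n, Real.log (1 + z ij)
        + ∑ ij : Fin m × Fin n, (D ij : ℝ) * (lam ij.1 + mu ij.2) := Finset.sum_add_distrib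
    _ = ∑ ij : Fin m × Fin n, Real.log (1 + z ij)
        + ∑ ij : Fin m × Fin n, z ij * (lam ij.1 + mu ij.2) := by rw [key]
    _ = ∑ ij, ((z ij + 1) * Real.log (z ij + 1) - z ij * Real.log (z ij)) := by
        rw [← Finset.sum_add_distrib]
        apply Finset.sum_congr rfl
        intro ij _
        have h0 : (0:ℝ) < z ij := hz ij
        have h1 : (0:ℝ) < z ij + 1 := by linarith
        have : lam ij.1 + mu ij.2 = Real.log (z ij + 1) - Real.log (z ij) := by
          rw [← hopt ij.1 ij.2, Real.log_div (by linarith) (ne_of_gt h0)]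
        rw [this]
        have : (1 : ℝ) + z ij = z ij + 1 := by ring
        rw [this]
        ring
end
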